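/- Consider the Probabilistic Serial mechanism, agent 1 with dichotomous utilities with interest set O̅, the truthful profile, and exhaustion time T of O̅. Suppose T < 1/2. Then in the modified eating process in which agent 1 is removed entirely (it never eats, while all other agents follow the normal rules), every item of O̅ is exhausted by time (3/2)·T. -/

import Mathlib

open MeasureTheory

/-- An execution of the Probabilistic Serial eating process with `n` agents and `m` items
(each of supply 1).  Agent `i` reports the strict preference order encoded by the injective
rank function `rk i` (`rk i j < rk i j'` means agent `i` ranks item `j` above item `j'`).
`active i t` tells whether agent `i` participates (eats at rate 1) at time `t`; the normal
scenario is `active = fun _ _ => True`, pausing/removing agents is modelled by making them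
inactive.  `eats i t = some j` means agent `i` is eating item `j` at time `t`, and `rem j t`
is the remaining supply of item `j` at time `t`: it equals `1` minus the total time agents
have spent eating `j` during `(0, t]`.  An active agent always eats its most preferred item
among those with positive remaining supply. -/
structure PSExec (n m : ℕ) (rk : Fin n → Fin m → ℕ) (active : Fin n → ℝ → Prop) where
  eats : Fin n → ℝ → Option (Fin m)
  rem : Fin m → ℝ → ℝ
  meas : ∀ i j, MeasurableSet {t : ℝ | eats i t = some j}
  rem_def : ∀ j, ∀ t : ℝ, 0 ≤ t →
    rem j t = 1 - ∑ i : Fin n,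
      (volume {s : ℝ | 0 < s ∧ s ≤ t ∧ eats i s = some j}).toReal
  eats_iff : ∀ i, ∀ t : ℝ, 0 ≤ t → active i t → ∀ j,
    (eats i t = some j ↔ 0 < rem j t ∧ ∀ j', 0 < rem j' t → rk i j ≤ rk i j')
  eats_none : ∀ i, ∀ t : ℝ, ¬ active i t → eats i t = none

namespace PSExec

variable {n m : ℕ} {rk : Fin n → Fin m → ℕ} {active : Fin n → ℝ → Prop}

/-- The total amount of item `j` eaten by agent `i` (the allocation `x i j`). -/
noncomputable def alloc (E : PSExec n m rk active) (i : Fin n) (j : Fin m) : ℝ :=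
  (volume {s : ℝ | 0 < s ∧ E.eats i s = some j}).toReal

/-- The expected utility of agent `i` with cardinal utilities `a`. -/
noncomputable def utility (E : PSExec n m rk active) (a : Fin m → ℝ) (i : Fin n) : ℝ :=
  ∑ j, a j * E.alloc i j

/-- Item `j` is exhausted exactly at time `τ`. -/
def exhaustedAt (E : PSExec n m rk active) (j : Fin m) (τ : ℝ) : Prop :=
  0 < τ ∧ E.rem j τ = 0 ∧ ∀ s : ℝ, 0 ≤ s → s < τ → 0 < E.rem j s

/-- Agent `i` is eating item `j` at the moment `τ`, in the left-limit sense (this is the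
sense used for "eating an item at the moment of its exhaustion"). -/
def eatsAt (E : PSExec n m rk active) (i : Fin n) (j : Fin m) (τ : ℝ) : Prop :=
  ∃ δ > 0, ∀ s : ℝ, τ - δ < s → s < τ → E.eats i s = some j

/-- `T` is the exact moment at which the last item of `Obar` is exhausted. -/
def exhaustTime (E : PSExec n m rk active) (Obar : Finset (Fin m)) (T : ℝ) : Prop :=
  (∀ j ∈ Obar, E.rem j T = 0) ∧ ∀ s : ℝ, 0 ≤ s → s < T → ∃ j ∈ Obar, 0 < E.rem j s

end PSExec

/-- Dichotomous cardinal utilities with interest set `Obar`. -/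
def dicho {m : ℕ} (Obar : Finset (Fin m)) : Fin m → ℝ :=
  fun j => if j ∈ Obar then 1 else 0


namespace PSExec

variable {n m : ℕ} {rk : Fin n → Fin m → ℕ} {active : Fin n → ℝ → Prop}

/-- The window of time in `(a,b]` during which agent `i` eats item `j`. -/
def window (E : PSExec n m rk active) (i : Fin n) (j : Fin m) (a b : ℝ) : Set ℝ :=
  {s : ℝ | a < s ∧ s ≤ b ∧ E.eats i s = some j}

lemma measurableSet_window (E : PSExec n m rk active) (i : Fin n) (j : Fin m) (a b : ℝ) :
    MeasurableSet (E.window i j a b) := by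
  have h : E.window i j a b = Set.Ioc a b ∩ {s : ℝ | E.eats i s = some j} := by
    ext s; simp [window, Set.mem_Ioc, and_assoc]
  rw [h]; exact measurableSet_Ioc.inter (E.meas i j)

lemma vol_window_le (E : PSExec n m rk active) (i : Fin n) (j : Fin m) (a b : ℝ) :
    volume (E.window i j a b) ≤ ENNReal.ofReal (b - a) := by
  rw [← Real.volume_Ioc]
  exact measure_mono (fun s hs => ⟨hs.1, hs.2.1⟩)

lemma vol_window_ne_top (E : PSExec n m rk active) (i : Fin n) (j : Fin m) (a b : ℝ) :
    volume (E.window i j a b) ≠ ⊤ :=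
  ne_top_of_le_ne_top ENNReal.ofReal_ne_top (E.vol_window_le i j a b)

lemma toReal_vol_window_nonneg (E : PSExec n m rk active) (i : Fin n) (j : Fin m) (a b : ℝ) :
    0 ≤ (volume (E.window i j a b)).toReal := ENNReal.toReal_nonneg

lemma toReal_vol_window_le (E : PSExec n m rk active) (i : Fin n) (j : Fin m) {a b : ℝ}
    (hab : a ≤ b) : (volume (E.window i j a b)).toReal ≤ b - a :=
  ENNReal.toReal_le_of_le_ofReal (by linarith) (E.vol_window_le i j a b)

/-- Total amount of item `j` eaten during `(a,b]`. -/
noncomputable def eaten (E : PSExec n m rk active) (j : Fin m) (a b : ℝ) : ℝ :=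
  ∑ i : Fin n, (volume (E.window i j a b)).toReal

lemma eaten_nonneg (E : PSExec n m rk active) (j : Fin m) (a b : ℝ) :
    0 ≤ E.eaten j a b :=
  Finset.sum_nonneg fun _ _ => ENNReal.toReal_nonneg

lemma eaten_le (E : PSExec n m rk active) (j : Fin m) {a b : ℝ} (hab : a ≤ b) :
    E.eaten j a b ≤ n * (b - a) := by
  calc E.eaten j a b ≤ ∑ _i : Fin n, (b - a) :=
        Finset.sum_le_sum fun i _ => E.toReal_vol_window_le i j hab
    _ = n * (b - a) := by rw [Finset.sum_const, Finset.card_univ, Fintype.card_fin, nsmul_eq_mul]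

lemma rem_eq (E : PSExec n m rk active) (j : Fin m) {a b : ℝ} (ha : 0 ≤ a) (hab : a ≤ b) :
    E.rem j b = E.rem j a - E.eaten j a b := by
  rw [E.rem_def j b (ha.trans hab), E.rem_def j a ha, eaten]
  rw [sub_sub, ← Finset.sum_add_distrib]
  congr 1
  refine Finset.sum_congr rfl fun i _ => ?_
  have hset : {s : ℝ | 0 < s ∧ s ≤ b ∧ E.eats i s = some j}
      = {s : ℝ | 0 < s ∧ s ≤ a ∧ E.eats i s = some j} ∪ E.window i j a b := by
    ext s
    simp only [Set.mem_setOf_eq, Set.mem_union, window]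
    constructor
    · rintro ⟨h1, h2, h3⟩
      rcases le_or_gt s a with h | h
      · exact Or.inl ⟨h1, h, h3⟩
      · exact Or.inr ⟨h, h2, h3⟩
    · rintro (⟨h1, h2, h3⟩ | ⟨h1, h2, h3⟩)
      · exact ⟨h1, h2.trans hab, h3⟩
      · exact ⟨ha.trans_lt h1, h2, h3⟩
  have hdisj : Disjoint {s : ℝ | 0 < s ∧ s ≤ a ∧ E.eats i s = some j} (E.window i j a b) := by
    rw [Set.disjoint_left]
    rintro s ⟨_, h2, _⟩ ⟨h1', _, _⟩
    exact absurd h2 (not_le.mpr h1')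
  have hm1 : {s : ℝ | 0 < s ∧ s ≤ a ∧ E.eats i s = some j} = E.window i j 0 a := rfl
  rw [hset, measure_union hdisj (E.measurableSet_window i j a b)]
  rw [hm1]
  rw [ENNReal.toReal_add (E.vol_window_ne_top i j 0 a) (E.vol_window_ne_top i j a b)]

lemma rem_antitone (E : PSExec n m rk active) (j : Fin m) {a b : ℝ} (ha : 0 ≤ a) (hab : a ≤ b) :
    E.rem j b ≤ E.rem j a := by
  rw [E.rem_eq j ha hab]
  linarith [E.eaten_nonneg j a b]

lemma rem_lipschitz (E : PSExec n m rk active) (j : Fin m) {a b : ℝ} (ha : 0 ≤ a) (hab : a ≤ b) :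
    E.rem j a - E.rem j b ≤ n * (b - a) := by
  rw [E.rem_eq j ha hab]
  linarith [E.eaten_le j hab]

lemma rem_zero (E : PSExec n m rk active) (j : Fin m) : E.rem j 0 = 1 := by
  rw [E.rem_def j 0 le_rfl]
  have : ∀ i : Fin n, {s : ℝ | 0 < s ∧ s ≤ 0 ∧ E.eats i s = some j} = ∅ := by
    intro i; ext s; simp only [Set.mem_setOf_eq, Set.mem_empty_iff_false, iff_false]
    rintro ⟨h1, h2, _⟩; exact absurd h2 (not_le.mpr h1)
  simp [this]

lemma pos_of_eats (E : PSExec n m rk active) {i : Fin n} {j : Fin m} {s : ℝ} (hs : 0 ≤ s)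
    (h : E.eats i s = some j) : 0 < E.rem j s := by
  by_cases hact : active i s
  · exact ((E.eats_iff i s hs hact j).1 h).1
  · rw [E.eats_none i s hact] at h; exact absurd h (by simp)

lemma no_eat (E : PSExec n m rk active) (j : Fin m) {a b : ℝ} (ha : 0 ≤ a)
    (h : ∀ s, a < s → s ≤ b → E.rem j s ≤ 0) : E.eaten j a b = 0 := by
  refine Finset.sum_eq_zero fun i _ => ?_
  have : E.window i j a b = ∅ := by
    ext s; simp only [window, Set.mem_setOf_eq, Set.mem_empty_iff_false, iff_false]
    rintro ⟨h1, h2, h3⟩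
    exact absurd (E.pos_of_eats (ha.trans h1.le) h3) (not_lt.mpr (h s h1 h2))
  simp [this]

lemma dead_stays (E : PSExec n m rk active) (j : Fin m) {a b : ℝ} (ha : 0 ≤ a)
    (hdead : E.rem j a ≤ 0) (hab : a ≤ b) : E.rem j b = E.rem j a := by
  rw [E.rem_eq j ha hab, E.no_eat j ha
    (fun s hs1 hs2 => (E.rem_antitone j ha hs1.le).trans hdead), sub_zero]

lemma rem_nonneg (E : PSExec n m rk active) (j : Fin m) {t : ℝ} (ht : 0 ≤ t) :
    0 ≤ E.rem j t := by
  by_contra hneg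
  push_neg at hneg
  set S := {s : ℝ | s ∈ Set.Icc (0:ℝ) t ∧ 0 ≤ E.rem j s} with hS
  have h0S : (0:ℝ) ∈ S := ⟨⟨le_rfl, ht⟩, by rw [E.rem_zero]; norm_num⟩
  have hne : S.Nonempty := ⟨0, h0S⟩
  have hbdd : BddAbove S := ⟨t, fun s hs => hs.1.2⟩
  set u := sSup S with hu
  have hu0 : 0 ≤ u := le_csSup hbdd h0S
  have hut : u ≤ t := csSup_le hne (fun s hs => hs.1.2)
  have huge : 0 ≤ E.rem j u := by
    by_contra hru
    push_neg at hru
    have hδ : 0 < (-E.rem j u) / (n + 1) := div_pos (by linarith) (by positivity)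
    obtain ⟨s, hsS, hs⟩ := exists_lt_of_lt_csSup hne (by linarith : u - (-E.rem j u) / (n + 1) < u)
    have hsu : s ≤ u := le_csSup hbdd hsS
    have hlip := E.rem_lipschitz j hsS.1.1 hsu
    have hn1 : (0:ℝ) < n + 1 := by positivity
    have : (n:ℝ) * (u - s) < (n+1) * ((-E.rem j u) / (n + 1)) := by
      apply lt_of_le_of_lt (b := (n:ℝ) * ((-E.rem j u) / (n+1)))
      · exact mul_le_mul_of_nonneg_left (by linarith) (Nat.cast_nonneg n)
      · apply mul_lt_mul_of_pos_right (by linarith) hδ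
    rw [mul_div_cancel₀ _ (ne_of_gt hn1)] at this
    have := hsS.2
    linarith
  have hult : u < t := by
    rcases eq_or_lt_of_le hut with h | h
    · exact absurd (h ▸ huge) (not_le.mpr hneg)
    · exact h
  have hule : E.rem j u ≤ 0 := by
    by_contra hpos
    push_neg at hpos
    set δ := min ((t - u) / 2) (E.rem j u / (2 * (n + 1))) with hδdef
    have hδpos : 0 < δ := by
      apply lt_min (by linarith) (by positivity)
    have hud : u + δ ≤ t := by
      have : δ ≤ (t - u)/2 := min_le_left _ _
      linarith
    have hlip := E.rem_lipschitz j hu0 (by linarith : u ≤ u + δ)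
    have hδ2 : (n:ℝ) * δ < E.rem j u := by
      have h1 : δ ≤ E.rem j u / (2 * (n + 1)) := min_le_right _ _
      have h2 : (n:ℝ) * δ ≤ (n:ℝ) * (E.rem j u / (2 * (n + 1))) :=
        mul_le_mul_of_nonneg_left h1 (Nat.cast_nonneg n)
      have h3 : (n:ℝ) * (E.rem j u / (2 * (n + 1))) < E.rem j u := by
        rw [mul_div_assoc']
        rw [div_lt_iff₀ (by positivity)]
        nlinarith [Nat.cast_nonneg (α := ℝ) n]
      linarith
    have hmem : u + δ ∈ S := by
      constructor
      · constructor
        · linarith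
        · exact hud
      · have : E.rem j u - E.rem j (u + δ) ≤ n * (u + δ - u) := hlip
        have : E.rem j u - E.rem j (u + δ) ≤ n * δ := by
          convert this using 2; ring
        linarith
    have := le_csSup hbdd hmem
    linarith
  have h0 : E.rem j u = 0 := le_antisymm hule huge
  have := E.dead_stays j hu0 hule hut
  rw [h0] at this
  linarith

lemma exists_eats (E : PSExec n m rk active) (i : Fin n) {s : ℝ} (hs : 0 ≤ s)
    (hact : active i s) (hne : ∃ j, 0 < E.rem j s) :
    ∃ j, E.eats i s = some j := by
  classical
  obtain ⟨j0, hj0⟩ := hne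
  obtain ⟨j, hjmem, hjmin⟩ := Finset.exists_min_image
    (Finset.univ.filter fun j => 0 < E.rem j s) (rk i) ⟨j0, by simp [hj0]⟩
  refine ⟨j, (E.eats_iff i s hs hact j).2
    ⟨(Finset.mem_filter.mp hjmem).2, fun j' hj' => hjmin j' (by simp [hj'])⟩⟩

lemma mono_aux {n m : ℕ} {rk : Fin n → Fin m → ℕ} {i1 : Fin n}
    (E : PSExec n m rk (fun _ _ => True)) (E' : PSExec n m rk (fun i _ => i ≠ i1)) :
    ∀ t, 0 ≤ t → ∀ z, E.rem z t ≤ E'.rem z t := by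
  classical
  by_contra hc
  push_neg at hc
  obtain ⟨t1, ht1, z1, hz1⟩ := hc
  set P := {t : ℝ | 0 ≤ t ∧ ∃ z, E'.rem z t < E.rem z t} with hP
  have hPne : P.Nonempty := ⟨t1, ht1, z1, hz1⟩
  have hPbdd : BddBelow P := ⟨0, fun p hp => hp.1⟩
  set t₀ := sInf P with ht₀
  have ht₀0 : 0 ≤ t₀ := le_csInf hPne fun p hp => hp.1
  have hat : ∀ z, E.rem z t₀ ≤ E'.rem z t₀ := by
    intro z
    by_contra h
    push_neg at h
    set η := E.rem z t₀ - E'.rem z t₀ with hη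
    have hηpos : 0 < η := by rw [hη]; linarith
    rcases eq_or_lt_of_le ht₀0 with h0 | h0
    · rw [← h0, E.rem_zero, E'.rem_zero] at h; linarith
    · set δ := min t₀ (η / (n + 1)) with hδ
      have hδpos : 0 < δ := lt_min h0 (div_pos hηpos (by positivity))
      set s := t₀ - δ / 2 with hs
      have hδt : δ ≤ t₀ := min_le_left _ _
      have hs0 : 0 ≤ s := by rw [hs]; linarith
      have hst : s ≤ t₀ := by rw [hs]; linarith
      have h1 : E.rem z t₀ ≤ E.rem z s := E.rem_antitone z hs0 hst
      have h2 : E'.rem z s - E'.rem z t₀ ≤ n * (t₀ - s) := E'.rem_lipschitz z hs0 hst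
      have h3 : (n:ℝ) * (t₀ - s) < η := by
        have hd : δ ≤ η / (n+1) := min_le_right _ _
        have hts : t₀ - s = δ / 2 := by rw [hs]; ring
        rw [hts]
        calc (n:ℝ) * (δ/2) ≤ (n:ℝ) * δ := by
              nlinarith [Nat.cast_nonneg (α := ℝ) n, hδpos]
          _ ≤ (n:ℝ) * (η/(n+1)) := mul_le_mul_of_nonneg_left hd (Nat.cast_nonneg n)
          _ < η := by
              rw [mul_div_assoc', div_lt_iff₀ (by positivity)]
              nlinarith [Nat.cast_nonneg (α := ℝ) n]
      have hsP : s ∈ P := ⟨hs0, z, by linarith⟩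
      have hle : t₀ ≤ s := csInf_le hPbdd hsP
      rw [hs] at hle
      linarith
  have key : ∃ δ > 0, ∀ t, t₀ ≤ t → t ≤ t₀ + δ → ∀ z, E.rem z t ≤ E'.rem z t := by
    set J := Finset.univ.filter (fun z => 0 < E.rem z t₀) with hJ
    rcases Finset.eq_empty_or_nonempty J with hJe | hJne
    · refine ⟨1, one_pos, fun t htl htu z => ?_⟩
      have hzd : E.rem z t₀ ≤ 0 := by
        by_contra hpos; push_neg at hpos
        have hmem : z ∈ J := by rw [hJ]; simpa using hpos
        rw [hJe] at hmem
        exact absurd hmem (Finset.notMem_empty z)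
      have hds := E.dead_stays z ht₀0 hzd htl
      have h2 := E'.rem_nonneg z (ht₀0.trans htl)
      linarith
    · obtain ⟨z₀, hz₀J, hz₀min⟩ := Finset.exists_min_image J (fun z => E.rem z t₀) hJne
      set ε := E.rem z₀ t₀ with hε
      have hεpos : 0 < ε := (Finset.mem_filter.mp hz₀J).2
      set δ := ε / (2 * n + 2) with hδ
      have hδpos : 0 < δ := div_pos hεpos (by positivity)
      have hnδ : (n:ℝ) * δ ≤ ε / 2 := by
        rw [hδ, mul_div_assoc', div_le_div_iff₀ (by positivity) (by norm_num)]
        nlinarith [Nat.cast_nonneg (α := ℝ) n, hεpos]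
      refine ⟨δ, hδpos, fun t htl htu z => ?_⟩
      by_cases hzJ : z ∈ J
      case neg =>
        have hzd : E.rem z t₀ ≤ 0 := by
          by_contra hpos; push_neg at hpos
          exact hzJ (by rw [hJ]; simpa using hpos)
        have hds := E.dead_stays z ht₀0 hzd htl
        have h2 := E'.rem_nonneg z (ht₀0.trans htl)
        linarith
      case pos =>
        have haliveE : ∀ z' ∈ J, ∀ s, t₀ ≤ s → s ≤ t → 0 < E.rem z' s := by
          intro z' hz' s hls hus
          have h1 := E.rem_lipschitz z' ht₀0 hls
          have h2 : (n:ℝ) * (s - t₀) ≤ (n:ℝ) * δ :=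
            mul_le_mul_of_nonneg_left (by linarith) (Nat.cast_nonneg n)
          have h3 : ε ≤ E.rem z' t₀ := hz₀min z' hz'
          linarith
        have haliveE' : ∀ z' ∈ J, ∀ s, t₀ ≤ s → s ≤ t → 0 < E'.rem z' s := by
          intro z' hz' s hls hus
          have h1 := E'.rem_lipschitz z' ht₀0 hls
          have h2 : (n:ℝ) * (s - t₀) ≤ (n:ℝ) * δ :=
            mul_le_mul_of_nonneg_left (by linarith) (Nat.cast_nonneg n)
          have h3 : ε ≤ E.rem z' t₀ := hz₀min z' hz'
          have h4 := hat z'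
          linarith
        have hsub : ∀ i : Fin n, (E'.window i z t₀ t) ⊆ (E.window i z t₀ t) := by
          intro i s hsmem
          obtain ⟨hs1, hs2, hs3⟩ := hsmem
          have hs0 : (0:ℝ) ≤ s := ht₀0.trans hs1.le
          have hi1 : i ≠ i1 := by
            intro hii
            have hnone := E'.eats_none i s (by simp [hii])
            rw [hnone] at hs3; exact absurd hs3 (by simp)
          have hmin := (E'.eats_iff i s hs0 hi1 z).1 hs3
          refine ⟨hs1, hs2, (E.eats_iff i s hs0 trivial z).2
            ⟨haliveE z hzJ s hs1.le hs2, fun z' hz' => ?_⟩⟩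
          have hz'J : z' ∈ J := by
            by_contra hz'n
            have hzd : E.rem z' t₀ ≤ 0 := by
              by_contra hpos; push_neg at hpos
              exact hz'n (by rw [hJ]; simpa using hpos)
            have hds := E.dead_stays z' ht₀0 hzd hs1.le
            linarith
          exact hmin.2 z' (haliveE' z' hz'J s hs1.le hs2)
        have heat : E'.eaten z t₀ t ≤ E.eaten z t₀ t := by
          refine Finset.sum_le_sum fun i _ => ?_
          exact (ENNReal.toReal_le_toReal (E'.vol_window_ne_top i z t₀ t)
            (E.vol_window_ne_top i z t₀ t)).2 (measure_mono (hsub i))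
        have he1 := E.rem_eq z ht₀0 htl
        have he2 := E'.rem_eq z ht₀0 htl
        have h4 := hat z
        linarith
  obtain ⟨δ, hδpos, hkey⟩ := key
  have hex : ∃ p ∈ P, p < t₀ + δ := by
    by_contra hnone
    push_neg at hnone
    have := le_csInf hPne hnone
    linarith
  obtain ⟨p, hpP, hpδ⟩ := hex
  have hpt : t₀ ≤ p := csInf_le hPbdd hpP
  obtain ⟨hp0, z, hz⟩ := hpP
  exact absurd (hkey p hpt hpδ.le z) (not_le.mpr hz)

/-- Item `j` is exhausted exactly at time `τ`. (copy of statement defined later) -/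
lemma exists_exhaustedAt' (E : PSExec n m rk active) (j : Fin m) {t : ℝ} (ht : 0 ≤ t)
    (h0 : E.rem j t = 0) :
    ∃ τ, τ ≤ t ∧ 0 < τ ∧ E.rem j τ = 0 ∧ ∀ s : ℝ, 0 ≤ s → s < τ → 0 < E.rem j s := by
  set S := {s : ℝ | 0 ≤ s ∧ E.rem j s = 0} with hS
  have hne : S.Nonempty := ⟨t, ht, h0⟩
  have hbdd : BddBelow S := ⟨0, fun s hs => hs.1⟩
  set τ := sInf S with hτ
  have hτ0 : 0 ≤ τ := le_csInf hne fun s hs => hs.1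
  have hτt : τ ≤ t := csInf_le hbdd ⟨ht, h0⟩
  have hτrem : E.rem j τ = 0 := by
    by_contra hη
    have hηpos : 0 < E.rem j τ := lt_of_le_of_ne (E.rem_nonneg j hτ0) (Ne.symm hη)
    set η := E.rem j τ with hηd
    have hex : ∃ p ∈ S, p < τ + η / (n + 1) := by
      by_contra hnone
      push_neg at hnone
      have := le_csInf hne hnone
      have hpos : 0 < η / (n+1) := div_pos hηpos (by positivity)
      linarith
    obtain ⟨p, hpS, hpτ⟩ := hex
    have hτp : τ ≤ p := csInf_le hbdd hpS
    have hlip := E.rem_lipschitz j hτ0 hτp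
    rw [hpS.2] at hlip
    have h1 : (p - τ) * (n + 1) < η := by
      have : p - τ < η / (n+1) := by linarith
      exact (lt_div_iff₀ (by positivity : (0:ℝ) < (n:ℝ)+1)).mp this
    nlinarith [hτp]
  have hτpos : 0 < τ := by
    rcases eq_or_lt_of_le hτ0 with h | h
    · exfalso
      rw [← h, E.rem_zero j] at hτrem
      norm_num at hτrem
    · exact h
  refine ⟨τ, hτt, hτpos, hτrem, fun s hs hsτ => ?_⟩
  have hsS : s ∉ S := fun hmem => absurd (csInf_le hbdd hmem) (not_le.mpr hsτ)
  have : E.rem j s ≠ 0 := fun h => hsS ⟨hs, h⟩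
  exact lt_of_le_of_ne (E.rem_nonneg j hs) (Ne.symm this)

lemma sum_vol_le (E : PSExec n m rk active) (i : Fin n) {b : ℝ} (hb : 0 ≤ b) :
    ∑ z : Fin m, (volume (E.window i z 0 b)).toReal ≤ b := by
  classical
  have hdisj : Set.PairwiseDisjoint (↑(Finset.univ : Finset (Fin m)))
      (fun z => E.window i z 0 b) := by
    intro x _ y _ hxy
    refine Set.disjoint_left.mpr ?_
    rintro s ⟨_, _, h1⟩ ⟨_, _, h2⟩
    rw [h1] at h2
    exact hxy (Option.some.inj h2)
  have hu := measure_biUnion_finset (μ := volume) hdisj (fun z _ => E.measurableSet_window i z 0 b)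
  have hsub : (⋃ z ∈ (Finset.univ : Finset (Fin m)), E.window i z 0 b) ⊆ Set.Ioc 0 b := by
    intro s hs
    obtain ⟨z, _, h1, h2, _⟩ := Set.mem_iUnion₂.mp hs
    exact ⟨h1, h2⟩
  calc ∑ z : Fin m, (volume (E.window i z 0 b)).toReal
      = (∑ z : Fin m, volume (E.window i z 0 b)).toReal :=
        (ENNReal.toReal_sum (fun z _ => E.vol_window_ne_top i z 0 b)).symm
    _ ≤ (volume (Set.Ioc (0:ℝ) b)).toReal := by
        rw [← hu]
        exact ENNReal.toReal_mono (by rw [Real.volume_Ioc]; exact ENNReal.ofReal_ne_top)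
          (measure_mono hsub)
    _ = b := by rw [Real.volume_Ioc, sub_zero, ENNReal.toReal_ofReal hb]

lemma sum_vol_ge (E : PSExec n m rk active) (i : Fin n) {b : ℝ} (hb : 0 ≤ b)
    (hact : ∀ s, 0 < s → s < b → active i s)
    (halive : ∀ s, 0 < s → s < b → ∃ z, 0 < E.rem z s) :
    b ≤ ∑ z : Fin m, (volume (E.window i z 0 b)).toReal := by
  have hsub : Set.Ioo (0:ℝ) b ⊆ ⋃ z ∈ (Finset.univ : Finset (Fin m)), E.window i z 0 b := by
    intro s hs
    obtain ⟨z, hz⟩ := E.exists_eats i hs.1.le (hact s hs.1 hs.2) (halive s hs.1 hs.2)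
    exact Set.mem_biUnion (Finset.mem_univ z) ⟨hs.1, hs.2.le, hz⟩
  have h1 : ENNReal.ofReal b ≤ ∑ z : Fin m, volume (E.window i z 0 b) := by
    calc ENNReal.ofReal b = volume (Set.Ioo (0:ℝ) b) := by rw [Real.volume_Ioo, sub_zero]
      _ ≤ volume (⋃ z ∈ (Finset.univ : Finset (Fin m)), E.window i z 0 b) := measure_mono hsub
      _ ≤ ∑ z : Fin m, volume (E.window i z 0 b) := measure_biUnion_finset_le _ _
  have hfin : (∑ z : Fin m, volume (E.window i z 0 b)) ≠ ⊤ :=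
    ENNReal.sum_ne_top.mpr fun z _ => E.vol_window_ne_top i z 0 b
  calc b = (ENNReal.ofReal b).toReal := (ENNReal.toReal_ofReal hb).symm
    _ ≤ (∑ z : Fin m, volume (E.window i z 0 b)).toReal := ENNReal.toReal_mono hfin h1
    _ = ∑ z : Fin m, (volume (E.window i z 0 b)).toReal :=
        ENNReal.toReal_sum (fun z _ => E.vol_window_ne_top i z 0 b)

end PSExec

/-- truthful profile, dichotomous utilities with interest set `Obar`, exhaustion
time `T < 1/2` of `Obar`: if agent 1 is removed entirely from the eating process, every item
of `Obar` is exhausted by time `(3/2)·T`. -/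
theorem removed_agent_exhaust_by_three_halves_T
    (n m : ℕ) (rk : Fin n → Fin m → ℕ) (hrk : ∀ i, Function.Injective (rk i))
    (i1 : Fin n) (Obar : Finset (Fin m))
    (htruth : ∀ j ∈ Obar, ∀ j' ∉ Obar, rk i1 j < rk i1 j')
    (E : PSExec n m rk (fun _ _ => True))
    (E' : PSExec n m rk (fun i _ => i ≠ i1))
    (T : ℝ) (hT : E.exhaustTime Obar T) (hT0 : 0 < T) (hThalf : T < 1 / 2) :
    ∀ j ∈ Obar, ∃ τ : ℝ, τ ≤ (3 / 2) * T ∧ E'.exhaustedAt j τ := by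
  classical
  intro j hj
  have hT2 : (0:ℝ) ≤ T := hT0.le
  have hmono := PSExec.mono_aux E E'
  have h32 : T ≤ 3 / 2 * T := by linarith
  have h32nonneg : (0:ℝ) ≤ 3 / 2 * T := by linarith
  have hzero : E'.rem j (3 / 2 * T) = 0 := by
    by_contra hpos0
    have hpos : 0 < E'.rem j (3 / 2 * T) :=
      lt_of_le_of_ne (E'.rem_nonneg j h32nonneg) (Ne.symm hpos0)
    have halive : ∀ s, 0 ≤ s → s ≤ 3 / 2 * T → 0 < E'.rem j s :=
      fun s hs hs' => lt_of_lt_of_le hpos (E'.rem_antitone j hs hs')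
    set D := Finset.univ.filter (fun z => E.rem z T = 0) with hD
    have hjD : j ∈ D := by rw [hD]; simpa using hT.1 j hj
    have h3 : 0 < ∑ z ∈ D, E'.rem z (3 / 2 * T) := by
      have := Finset.single_le_sum (f := fun z => E'.rem z (3 / 2 * T))
        (fun z _ => E'.rem_nonneg z h32nonneg) hjD
      linarith
    have h1 : ∑ z ∈ D, E'.rem z T ≤ T := by
      have e1 : ∑ z ∈ D, E'.rem z T = ∑ z ∈ D, (E'.rem z T - E.rem z T) := by
        refine Finset.sum_congr rfl fun z hz => ?_
        rw [hD] at hz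
        have hz0 : E.rem z T = 0 := (Finset.mem_filter.mp hz).2
        rw [hz0, sub_zero]
      have e2 : ∑ z ∈ D, (E'.rem z T - E.rem z T) ≤ ∑ z : Fin m, (E'.rem z T - E.rem z T) :=
        Finset.sum_le_sum_of_subset_of_nonneg (Finset.subset_univ D)
          (fun z _ _ => by linarith [hmono T hT2 z])
      have emid : ∑ z : Fin m, (E'.rem z T - E.rem z T)
          = ∑ i : Fin n, (∑ z : Fin m, (volume (E.window i z 0 T)).toReal
              - ∑ z : Fin m, (volume (E'.window i z 0 T)).toReal) := by
        have hz : ∀ z : Fin m, E'.rem z T - E.rem z T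
            = ∑ i : Fin n, ((volume (E.window i z 0 T)).toReal
                - (volume (E'.window i z 0 T)).toReal) := by
          intro z
          have hE := E.rem_eq z le_rfl hT2
          have hE' := E'.rem_eq z le_rfl hT2
          rw [E.rem_zero] at hE
          rw [E'.rem_zero] at hE'
          rw [hE, hE']
          simp only [PSExec.eaten]
          rw [Finset.sum_sub_distrib]
          ring
        rw [Finset.sum_congr rfl (fun z _ => hz z), Finset.sum_comm]
        exact Finset.sum_congr rfl fun i _ => Finset.sum_sub_distrib _ _
      have e4 : ∀ i : Fin n, (∑ z : Fin m, (volume (E.window i z 0 T)).toReal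
            - ∑ z : Fin m, (volume (E'.window i z 0 T)).toReal)
          ≤ if i = i1 then T else 0 := by
        intro i
        by_cases hi : i = i1
        · rw [if_pos hi]
          have hle := E.sum_vol_le i hT2
          have h0 : 0 ≤ ∑ z : Fin m, (volume (E'.window i z 0 T)).toReal :=
            Finset.sum_nonneg fun z _ => ENNReal.toReal_nonneg
          linarith
        · rw [if_neg hi]
          have hle := E.sum_vol_le i hT2
          have hge := E'.sum_vol_ge i hT2 (fun s _ _ => hi)
            (fun s hs1 hs2 => by
              obtain ⟨z0, _, hz0⟩ := hT.2 s hs1.le hs2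
              exact ⟨z0, lt_of_lt_of_le hz0 (hmono s hs1.le z0)⟩)
          linarith
      have e5 : ∑ i : Fin n, (if i = i1 then T else 0) = T := by simp
      calc ∑ z ∈ D, E'.rem z T = ∑ z ∈ D, (E'.rem z T - E.rem z T) := e1
        _ ≤ ∑ z : Fin m, (E'.rem z T - E.rem z T) := e2
        _ = ∑ i : Fin n, (∑ z : Fin m, (volume (E.window i z 0 T)).toReal
              - ∑ z : Fin m, (volume (E'.window i z 0 T)).toReal) := emid
        _ ≤ ∑ i : Fin n, (if i = i1 then T else 0) := Finset.sum_le_sum (fun i _ => e4 i)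
        _ = T := e5
    have h2 : T ≤ ∑ z ∈ D, E'.rem z T - ∑ z ∈ D, E'.rem z (3 / 2 * T) := by
      have heq : ∑ z ∈ D, E'.rem z T - ∑ z ∈ D, E'.rem z (3 / 2 * T)
          = ∑ z ∈ D, E'.eaten z T (3 / 2 * T) := by
        rw [← Finset.sum_sub_distrib]
        refine Finset.sum_congr rfl fun z _ => ?_
        have := E'.rem_eq z hT2 h32
        linarith
      rw [heq]
      have hsumV : ∑ i : Fin n, (volume (E.window i j 0 T)).toReal = 1 := by
        have hdef : E.rem j T = 1 - ∑ i : Fin n, (volume (E.window i j 0 T)).toReal :=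
          E.rem_def j T hT2
        rw [hT.1 j hj] at hdef
        linarith
      have hVle : ∀ i : Fin n, (volume (E.window i j 0 T)).toReal ≤ T := by
        intro i
        have := E.toReal_vol_window_le i j (show (0:ℝ) ≤ T from hT2)
        linarith
      set A := Finset.univ.filter
        (fun i : Fin n => i ≠ i1 ∧ volume (E.window i j 0 T) ≠ 0) with hA
      have hcard : 1 < A.card := by
        by_contra hc
        push_neg at hc
        have hsplit := Finset.sum_sdiff (f := fun i : Fin n => (volume (E.window i j 0 T)).toReal)
          (Finset.subset_univ A)
        have hA1 : ∑ i ∈ A, (volume (E.window i j 0 T)).toReal ≤ 1 * T := by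
          calc ∑ i ∈ A, (volume (E.window i j 0 T)).toReal ≤ A.card • T :=
                Finset.sum_le_card_nsmul A _ T (fun i _ => hVle i)
            _ = (A.card : ℝ) * T := nsmul_eq_mul _ _
            _ ≤ 1 * T := by
                apply mul_le_mul_of_nonneg_right _ hT2
                exact_mod_cast hc
        have hA2 : ∑ i ∈ Finset.univ \ A, (volume (E.window i j 0 T)).toReal ≤ T := by
          have hterm : ∀ i ∈ Finset.univ \ A,
              (volume (E.window i j 0 T)).toReal ≤ if i = i1 then T else 0 := by
            intro i hi
            rw [Finset.mem_sdiff] at hi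
            by_cases hii : i = i1
            · rw [if_pos hii]; exact hVle i
            · rw [if_neg hii]
              have hv0 : volume (E.window i j 0 T) = 0 := by
                by_contra hne
                exact hi.2 (by rw [hA]; simp [hii, hne])
              rw [hv0]
              simp
          calc ∑ i ∈ Finset.univ \ A, (volume (E.window i j 0 T)).toReal
              ≤ ∑ i ∈ Finset.univ \ A, (if i = i1 then T else 0) := Finset.sum_le_sum hterm
            _ ≤ ∑ i : Fin n, (if i = i1 then T else 0) :=
                Finset.sum_le_sum_of_subset_of_nonneg Finset.sdiff_subset
                  (fun i _ _ => by split_ifs <;> simp [hT2])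
            _ = T := by simp
        rw [← hsplit] at hsumV
        linarith
      obtain ⟨ia, hiaA, ib, hibA, hab⟩ := Finset.one_lt_card.mp hcard
      have hagent : ∀ i ∈ A, ∀ s, T < s → s < 3 / 2 * T → ∃ z ∈ D, E'.eats i s = some z := by
        intro i hiA s hs1 hs2
        rw [hA] at hiA
        obtain ⟨hi1, hVne⟩ := (Finset.mem_filter.mp hiA).2
        have hwne : (E.window i j 0 T).Nonempty := by
          rw [Set.nonempty_iff_ne_empty]
          intro hemp
          apply hVne
          rw [hemp]
          exact measure_empty
        obtain ⟨u, hu1, hu2, hu3⟩ := hwne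
        have hu0 : (0:ℝ) ≤ u := hu1.le
        have hs0 : (0:ℝ) ≤ s := hT2.trans hs1.le
        have hjs : 0 < E'.rem j s := halive s hs0 hs2.le
        obtain ⟨z, hzeats⟩ := E'.exists_eats i hs0 hi1 ⟨j, hjs⟩
        have hmin := (E'.eats_iff i s hs0 hi1 z).1 hzeats
        have hzj : rk i z ≤ rk i j := hmin.2 j hjs
        refine ⟨z, ?_, hzeats⟩
        rw [hD]
        simp only [Finset.mem_filter, Finset.mem_univ, true_and]
        by_cases hzej : z = j
        · rw [hzej]; exact hT.1 j hj
        · have hEmin := (E.eats_iff i u hu0 trivial j).1 hu3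
          have hnot : ¬ (0 < E.rem z u) := fun hcc =>
            hzej (hrk i (le_antisymm hzj (hEmin.2 z hcc)))
          have hz0 : E.rem z u = 0 := le_antisymm (not_lt.mp hnot) (E.rem_nonneg z hu0)
          have hds := E.dead_stays z hu0 (le_of_eq hz0) hu2
          rw [hds, hz0]
      have hper : ∀ i ∈ A, T / 2 ≤ ∑ z ∈ D, (volume (E'.window i z T (3 / 2 * T))).toReal := by
        intro i hiA
        have hsub : Set.Ioo T (3 / 2 * T) ⊆ ⋃ z ∈ D, E'.window i z T (3 / 2 * T) := by
          intro s hs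
          obtain ⟨z, hzD, hzeats⟩ := hagent i hiA s hs.1 hs.2
          exact Set.mem_biUnion hzD ⟨hs.1, hs.2.le, hzeats⟩
        have hh1 : ENNReal.ofReal (T / 2) ≤ ∑ z ∈ D, volume (E'.window i z T (3 / 2 * T)) := by
          calc ENNReal.ofReal (T / 2) = volume (Set.Ioo T (3 / 2 * T)) := by
                rw [Real.volume_Ioo]; congr 1; ring
            _ ≤ volume (⋃ z ∈ D, E'.window i z T (3 / 2 * T)) := measure_mono hsub
            _ ≤ ∑ z ∈ D, volume (E'.window i z T (3 / 2 * T)) := measure_biUnion_finset_le _ _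
        have hfin : (∑ z ∈ D, volume (E'.window i z T (3 / 2 * T))) ≠ ⊤ :=
          ENNReal.sum_ne_top.mpr fun z _ => E'.vol_window_ne_top i z T (3 / 2 * T)
        calc T / 2 = (ENNReal.ofReal (T / 2)).toReal := (ENNReal.toReal_ofReal (by linarith)).symm
          _ ≤ (∑ z ∈ D, volume (E'.window i z T (3 / 2 * T))).toReal :=
              ENNReal.toReal_mono hfin hh1
          _ = ∑ z ∈ D, (volume (E'.window i z T (3 / 2 * T))).toReal :=
              ENNReal.toReal_sum fun z _ => E'.vol_window_ne_top i z T (3 / 2 * T)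
      have hswap : ∑ z ∈ D, E'.eaten z T (3 / 2 * T)
          = ∑ i : Fin n, ∑ z ∈ D, (volume (E'.window i z T (3 / 2 * T))).toReal := by
        simp only [PSExec.eaten]
        exact Finset.sum_comm
      rw [hswap]
      calc T = T / 2 + T / 2 := by ring
        _ ≤ (∑ z ∈ D, (volume (E'.window ia z T (3 / 2 * T))).toReal)
            + (∑ z ∈ D, (volume (E'.window ib z T (3 / 2 * T))).toReal) :=
            add_le_add (hper ia hiaA) (hper ib hibA)
        _ = ∑ i ∈ ({ia, ib} : Finset (Fin n)),
              ∑ z ∈ D, (volume (E'.window i z T (3 / 2 * T))).toReal :=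
            (Finset.sum_pair (f := fun i => ∑ z ∈ D, (volume (E'.window i z T (3 / 2 * T))).toReal) hab).symm
        _ ≤ ∑ i : Fin n, ∑ z ∈ D, (volume (E'.window i z T (3 / 2 * T))).toReal :=
            Finset.sum_le_sum_of_subset_of_nonneg (Finset.subset_univ _)
              (fun i _ _ => Finset.sum_nonneg fun z _ => ENNReal.toReal_nonneg)
    linarith
  obtain ⟨τ, hτle, hτpos, hτ0, hτpre⟩ := E'.exists_exhaustedAt' j h32nonneg hzero
  exact ⟨τ, hτle, hτpos, hτ0, hτpre⟩
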